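/- Let X := {x ∈ ℝⁿ : A x ≥ b} be a nonempty compact polyhedron, let x̂_1, …, x̂_N ∈ X, and let Θ ⊆ ℝⁿ be a nonempty set closed under multiplication by positive scalars such that min_{x ∈ X} θᵀx > 0 for every θ ∈ Θ. Then the optimal value of the inverse relative sub-optimality problem equals that of its normalized dual reformulation: inf_{θ ∈ Θ} (1/N) Σ_{i=1}^N | θᵀx̂_i / (min_{x ∈ X} θᵀx) − 1 | = inf { (1/N) Σ_{i=1}^N | θᵀx̂_i − 1 | : θ ∈ Θ, λ ∈ ℝᵐ, λ ≥ 0, Aᵀλ = θ, bᵀλ = 1 }. -/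

import Mathlib

open scoped Matrix

lemma cone_caratheodory {ι V : Type*} [Fintype ι] [DecidableEq ι] [AddCommGroup V] [Module ℝ V]
    (v : ι → V) :
    ∀ (s : Finset ι) (c : ι → ℝ), (∀ i, 0 ≤ c i) → (∀ i ∉ s, c i = 0) →
      ∃ (c' : ι → ℝ) (t : Finset ι), (∀ i, 0 ≤ c' i) ∧ (∀ i ∉ t, c' i = 0) ∧
        (∑ i, c' i • v i = ∑ i, c i • v i) ∧ LinearIndependent ℝ (fun i : t => v i) := by
  intro s
  induction s using Finset.strongInductionOn with
  | _ s IH =>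
  intro c hc hs
  by_cases hli : LinearIndependent ℝ (fun i : s => v i)
  · exact ⟨c, s, hc, hs, rfl, hli⟩
  · obtain ⟨g, hg0, j, hgj⟩ := Fintype.not_linearIndependent_iff.mp hli
    -- extend g to ι
    set d : ι → ℝ := fun i => if h : i ∈ s then g ⟨i, h⟩ else 0 with hd
    have hds : ∀ i ∉ s, d i = 0 := fun i hi => by simp [hd, hi]
    have hdsum : ∑ i, d i • v i = 0 := by
      rw [← Finset.sum_subset (Finset.subset_univ s) (fun i _ hi => by
        rw [hds i hi, zero_smul])]
      rw [← hg0, ← Finset.sum_attach s (fun i => d i • v i)]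
      exact Finset.sum_congr rfl (fun i _ => by simp [hd, i.2])
    have hdne : ∃ i, d i ≠ 0 := ⟨j, by simpa [hd, j.2] using hgj⟩
    -- WLOG some positive entry
    obtain ⟨e, hesum, hes, i₁, hi₁⟩ :
        ∃ e : ι → ℝ, (∑ i, e i • v i = 0) ∧ (∀ i ∉ s, e i = 0) ∧ ∃ i, 0 < e i := by
      by_cases hp : ∃ i, 0 < d i
      · exact ⟨d, hdsum, hds, hp⟩
      · push_neg at hp
        obtain ⟨i, hi⟩ := hdne
        refine ⟨-d, by simpa using congrArg Neg.neg hdsum, fun i hi => by simp [hds i hi], i, ?_⟩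
        simp only [Pi.neg_apply]
        have := hp i
        cases lt_or_eq_of_le this with
        | inl h => linarith
        | inr h => exact absurd h hi
    clear hdsum hds hdne hd d hg0 hgj hli g j
    have hi₁s : i₁ ∈ s := by
      by_contra h
      rw [hes i₁ h] at hi₁; exact lt_irrefl 0 hi₁
    set T : Finset ι := s.filter (fun i => 0 < e i) with hT
    have hTne : T.Nonempty := ⟨i₁, by simp [hT, hi₁s, hi₁]⟩
    obtain ⟨i₀, hi₀T, hmin⟩ := T.exists_min_image (fun i => c i / e i) hTne
    have hi₀s : i₀ ∈ s := (Finset.mem_filter.mp hi₀T).1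
    have he₀ : 0 < e i₀ := (Finset.mem_filter.mp hi₀T).2
    set r : ℝ := c i₀ / e i₀ with hr
    have hr0 : 0 ≤ r := div_nonneg (hc i₀) he₀.le
    set c' : ι → ℝ := fun i => c i - r * e i with hc'
    have hc'0 : ∀ i, 0 ≤ c' i := by
      intro i
      by_cases hei : 0 < e i
      · by_cases his : i ∈ s
        · have hle : r ≤ c i / e i := hmin i (Finset.mem_filter.mpr ⟨his, hei⟩)
          have : r * e i ≤ c i := (le_div_iff₀ hei).mp hle
          simp only [hc']; linarith
        · rw [hes i his] at hei; exact absurd hei (lt_irrefl 0)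
      · push_neg at hei
        simp only [hc']
        nlinarith [hc i]
    have hc'i₀ : c' i₀ = 0 := by
      simp only [hc', hr]; field_simp; ring
    have hc's : ∀ i ∉ s.erase i₀, c' i = 0 := by
      intro i hi
      by_cases his : i ∈ s
      · have : i = i₀ := by
          by_contra hne
          exact hi (Finset.mem_erase.mpr ⟨hne, his⟩)
        rw [this]; exact hc'i₀
      · simp only [hc', hs i his, hes i his]; ring
    have hsum' : ∑ i, c' i • v i = ∑ i, c i • v i := by
      simp only [hc', sub_smul, mul_smul, Finset.sum_sub_distrib, ← Finset.smul_sum, hesum,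
        smul_zero, sub_zero]
    obtain ⟨c'', t, h1, h2, h3, h4⟩ :=
      IH (s.erase i₀) (Finset.erase_ssubset hi₀s) c' hc'0 hc's
    exact ⟨c'', t, h1, h2, h3.trans hsum', h4⟩

lemma cone_isClosed {ι V : Type*} [Fintype ι] [DecidableEq ι] [NormedAddCommGroup V]
    [NormedSpace ℝ V] [FiniteDimensional ℝ V] (v : ι → V) :
    IsClosed {x : V | ∃ c : ι → ℝ, (∀ i, 0 ≤ c i) ∧ x = ∑ i, c i • v i} := by
  have key : {x : V | ∃ c : ι → ℝ, (∀ i, 0 ≤ c i) ∧ x = ∑ i, c i • v i}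
      = ⋃ t : {t : Finset ι // LinearIndependent ℝ (fun i : t => v i)},
          (fun c : ↥(t.1) → ℝ => ∑ i, c i • v i) '' {c | ∀ i, 0 ≤ c i} := by
    ext x
    simp only [Set.mem_setOf_eq, Set.mem_iUnion, Set.mem_image]
    constructor
    · rintro ⟨c, hc, rfl⟩
      obtain ⟨c', t, h1, h2, h3, h4⟩ := cone_caratheodory v Finset.univ c hc (by simp)
      refine ⟨⟨t, h4⟩, fun i => c' i, fun i => h1 i, ?_⟩
      show ∑ i : ↥t, c' ↑i • v ↑i = _
      rw [Finset.sum_coe_sort t (fun i => c' i • v i), ← h3]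
      exact Finset.sum_subset (Finset.subset_univ t) (fun i _ hi => by
        rw [h2 i hi, zero_smul])
    · rintro ⟨⟨t, ht⟩, c, hc, rfl⟩
      refine ⟨fun i => if h : i ∈ t then c ⟨i, h⟩ else 0, fun i => ?_, ?_⟩
      · by_cases h : i ∈ t <;> simp [h, hc _]
      · symm
        show (∑ i : ι, _) = ∑ i : ↥t, c i • v ↑i
        rw [← Finset.sum_subset (Finset.subset_univ t) (fun i _ hi => by simp [hi]),
          ← Finset.sum_coe_sort t
            (fun i => (if h : i ∈ t then c ⟨i, h⟩ else (0:ℝ)) • v i)]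
        exact Finset.sum_congr rfl (fun i _ => by simp [i.2])
  rw [key]
  refine isClosed_iUnion_of_finite (fun t => ?_)
  obtain ⟨t, ht⟩ := t
  let L : (↥t → ℝ) →ₗ[ℝ] V :=
    { toFun := fun c => ∑ i, c i • v i
      map_add' := fun c d => by simp [add_smul, Finset.sum_add_distrib]
      map_smul' := fun r c => by simp [Finset.smul_sum, mul_smul]
      }
  have hinj : Function.Injective L := by
    rw [← LinearMap.ker_eq_bot, LinearMap.ker_eq_bot']
    intro c hc
    exact funext (Fintype.linearIndependent_iff.mp ht c hc)
  have hcl : IsClosed {c : ↥t → ℝ | ∀ i, 0 ≤ c i} := by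
    have : {c : ↥t → ℝ | ∀ i, 0 ≤ c i} = ⋂ i, {c | 0 ≤ c i} :=
      by ext c; simp
    rw [this]
    exact isClosed_iInter (fun i => isClosed_le continuous_const (continuous_apply i))
  exact (L.isClosedEmbedding_of_injective (LinearMap.ker_eq_bot.mpr hinj)).isClosedMap
    _ hcl

lemma lp_dual_exists {n m : ℕ} (A : Matrix (Fin m) (Fin n) ℝ) (b : Fin m → ℝ)
    (θ : Fin n → ℝ) (s : ℝ)
    (hlb : ∀ x, b ≤ A.mulVec x → s ≤ θ ⬝ᵥ x)
    (hbd : ∀ u : Fin n → ℝ, 0 ≤ A.mulVec u → u = 0) :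
    ∃ lam : Fin m → ℝ, 0 ≤ lam ∧ Aᵀ.mulVec lam = θ ∧ s ≤ b ⬝ᵥ lam := by
  classical
  set w : (Fin m ⊕ Unit) → (Fin n → ℝ) × ℝ := fun i =>
    Sum.elim (fun i => ((fun j => A i j), b i)) (fun _ => (0, -1)) i with hw
  set C : Set ((Fin n → ℝ) × ℝ) := {x : (Fin n → ℝ) × ℝ | ∃ c : Fin m ⊕ Unit → ℝ, (∀ i, 0 ≤ c i) ∧ x = ∑ i, c i • w i}
    with hC
  have hCcl : IsClosed C := cone_isClosed w
  have hmemC : ∀ i, w i ∈ C := by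
    intro i
    refine ⟨fun k => if k = i then 1 else 0, fun k => by positivity, ?_⟩
    simp [Finset.sum_ite_eq']
  have h0C : (0 : (Fin n → ℝ) × ℝ) ∈ C := ⟨0, fun i => le_refl 0, by simp⟩
  have hscaleC : ∀ a ∈ C, ∀ t : ℝ, 0 ≤ t → t • a ∈ C := by
    rintro a ⟨c, hc, rfl⟩ t ht
    exact ⟨fun i => t * c i, fun i => mul_nonneg ht (hc i), by
      simp [Finset.smul_sum, mul_smul]⟩
  have hconv : Convex ℝ C := by
    rintro x ⟨c₁, hc₁, rfl⟩ y ⟨c₂, hc₂, rfl⟩ a b' ha hb' hab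
    refine ⟨fun i => a * c₁ i + b' * c₂ i,
      fun i => add_nonneg (mul_nonneg ha (hc₁ i)) (mul_nonneg hb' (hc₂ i)), ?_⟩
    simp [Finset.smul_sum, mul_smul, add_smul, Finset.sum_add_distrib]
  -- main claim
  have hkey : ((θ, s) : (Fin n → ℝ) × ℝ) ∈ C := by
    by_contra hnot
    obtain ⟨f, u, hfu, huf⟩ := geometric_hahn_banach_closed_point hconv hCcl hnot
    have hu0 : 0 < u := by simpa using hfu 0 h0C
    have hfC : ∀ a ∈ C, f a ≤ 0 := by
      intro a ha
      by_contra hpos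
      push_neg at hpos
      have h1 : ((u + 1) / f a) • a ∈ C :=
        hscaleC a ha _ (div_nonneg (by linarith) hpos.le)
      have := hfu _ h1
      rw [map_smul, smul_eq_mul, div_mul_cancel₀ _ (ne_of_gt hpos)] at this
      linarith
    set uvec : Fin n → ℝ := fun j => f ((Pi.single j 1 : Fin n → ℝ), 0) with huvec
    set γ : ℝ := f ((0 : Fin n → ℝ), 1) with hγ
    have hrep : ∀ (x : Fin n → ℝ) (t : ℝ),
        f ((x, t) : (Fin n → ℝ) × ℝ) = (∑ j, x j * uvec j) + t * γ := by
      intro x t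
      have hx : ((x, t) : (Fin n → ℝ) × ℝ)
          = (∑ j, x j • (((Pi.single j 1 : Fin n → ℝ), (0:ℝ)) : (Fin n → ℝ) × ℝ))
            + t • (((0 : Fin n → ℝ), (1:ℝ)) : (Fin n → ℝ) × ℝ) := by
        refine Prod.ext ?_ ?_
        · simp only [Prod.fst_add, Prod.fst_sum, Prod.smul_fst, Prod.smul_snd]
          funext j
          simp [Finset.sum_apply, Pi.single_apply, Finset.sum_ite_eq']
        · simp [Prod.snd_sum]
      rw [hx, map_add, map_sum, map_smul]
      simp only [map_smul, smul_eq_mul]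
      rfl
    have hwi : ∀ i : Fin m, (∑ j, A i j * uvec j) + b i * γ ≤ 0 := by
      intro i
      have h := hfC _ (hmemC (Sum.inl i))
      simp only [hw, Sum.elim_inl] at h
      rwa [hrep] at h
    have hγ0 : 0 ≤ γ := by
      have h := hfC _ (hmemC (Sum.inr ()))
      simp only [hw, Sum.elim_inr] at h
      rw [hrep] at h
      simp only [Pi.zero_apply, zero_mul, Finset.sum_const_zero, zero_add] at h
      linarith
    have hθs : 0 < (∑ j, θ j * uvec j) + s * γ := by
      have := huf
      rw [hrep] at this
      linarith
    rcases eq_or_lt_of_le hγ0 with hγz | hγp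
    · -- γ = 0 case
      have hAu : 0 ≤ A.mulVec (-uvec) := by
        intro i
        have h1 := hwi i
        rw [← hγz, mul_zero, add_zero] at h1
        have h2 : (A.mulVec (-uvec)) i = -∑ j, A i j * uvec j := by
          simp [Matrix.mulVec_neg, Matrix.mulVec, dotProduct]
        rw [Pi.zero_apply, h2]
        linarith
      have huz : uvec = 0 := by
        have := hbd _ hAu
        simpa [neg_eq_zero] using this
      rw [huz] at hθs
      rw [← hγz] at hθs
      simp at hθs
    · -- γ > 0 case
      set x : Fin n → ℝ := (-(γ⁻¹)) • uvec with hx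
      have h5 : γ * γ⁻¹ = 1 := mul_inv_cancel₀ (ne_of_gt hγp)
      have hxX : b ≤ A.mulVec x := by
        intro i
        have h1 := hwi i
        have hD : (A.mulVec uvec) i = ∑ j, A i j * uvec j := rfl
        have h2 : (A.mulVec x) i = (-(γ⁻¹)) * (A.mulVec uvec) i := by
          rw [hx, Matrix.mulVec_smul]
          simp [Pi.smul_apply, smul_eq_mul]
        rw [h2, hD]
        have h8 : γ⁻¹ * (b i * γ) = b i := by field_simp
        linarith [h8, mul_le_mul_of_nonneg_left h1 (inv_nonneg.mpr hγp.le)]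
      have h3 := hlb x hxX
      have h4 : θ ⬝ᵥ x = (-(γ⁻¹)) * ∑ j, θ j * uvec j := by
        rw [hx, dotProduct_smul, smul_eq_mul]
        rfl
      rw [h4] at h3
      have h6 : s * γ ≤ ((-(γ⁻¹)) * ∑ j, θ j * uvec j) * γ :=
        mul_le_mul_of_nonneg_right h3 hγp.le
      have h7 : ((-(γ⁻¹)) * ∑ j, θ j * uvec j) * γ = -∑ j, θ j * uvec j := by
        field_simp
      linarith
  -- extract the dual variables
  obtain ⟨c, hc, hrep⟩ := hkey
  refine ⟨fun i => c (Sum.inl i), fun i => hc _, ?_, ?_⟩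
  · funext j
    have h := congrArg (fun p : (Fin n → ℝ) × ℝ => p.1 j) hrep
    simp only [hw, Sum.elim_inl, Sum.elim_inr, Fintype.sum_sum_type, Prod.smul_mk, Prod.fst_add, Prod.fst_sum, Prod.snd_add, Prod.snd_sum, Finset.sum_apply, Pi.add_apply, Pi.smul_apply, smul_eq_mul, smul_zero, mul_zero, Finset.sum_const_zero, add_zero, mul_neg_one, Finset.univ_unique, Finset.sum_singleton, Pi.zero_apply] at h
    simp only [Matrix.mulVec, dotProduct, Matrix.transpose_apply]
    rw [h]
    exact Finset.sum_congr rfl (fun i _ => mul_comm _ _)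
  · have h := congrArg Prod.snd hrep
    simp only [hw, Sum.elim_inl, Sum.elim_inr, Fintype.sum_sum_type, Prod.smul_mk, Prod.fst_add, Prod.fst_sum, Prod.snd_add, Prod.snd_sum, Finset.sum_apply, Pi.add_apply, Pi.smul_apply, smul_eq_mul, smul_zero, mul_zero, Finset.sum_const_zero, add_zero, mul_neg_one, Finset.univ_unique, Finset.sum_singleton, Pi.zero_apply] at h
    have hb : b ⬝ᵥ (fun i => c (Sum.inl i)) = ∑ i, c (Sum.inl i) * b i := by
      simp [dotProduct, mul_comm]
    rw [hb]
    have h9 : 0 ≤ c (Sum.inr default) := hc _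
    linarith [h.ge, h.le]

set_option maxHeartbeats 2000000 in
/-- The inverse relative sub-optimality problem over the common linear forward problem
`min { θᵀx : A x ≥ b }` equals its normalized dual reformulation, assuming `Θ` is
closed under positive scaling and every `θ ∈ Θ` has positive optimal value. -/
theorem inverse_rso_dual_reformulation {n m N : ℕ} (hN : 0 < N)
    (A : Matrix (Fin m) (Fin n) ℝ) (b : Fin m → ℝ)
    (X : Set (Fin n → ℝ)) (hX : X = {x | b ≤ A.mulVec x})
    (hne : X.Nonempty) (hcpt : IsCompact X)
    (xhat : Fin N → Fin n → ℝ) (hxhat : ∀ i, xhat i ∈ X)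
    (Θ : Set (Fin n → ℝ)) (hΘne : Θ.Nonempty)
    (hscale : ∀ θ ∈ Θ, ∀ α : ℝ, 0 < α → α • θ ∈ Θ)
    (hpos : ∀ θ ∈ Θ, 0 < sInf ((fun x => θ ⬝ᵥ x) '' X)) :
    sInf ((fun θ => (1 / (N : ℝ)) *
          ∑ i, |θ ⬝ᵥ xhat i / sInf ((fun x => θ ⬝ᵥ x) '' X) - 1|) '' Θ)
      = sInf {v : ℝ | ∃ θ ∈ Θ, ∃ lam : Fin m → ℝ,
          0 ≤ lam ∧ Aᵀ.mulVec lam = θ ∧ b ⬝ᵥ lam = 1 ∧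
          v = (1 / (N : ℝ)) * ∑ i, |θ ⬝ᵥ xhat i - 1|} := by
  classical
  set S : (Fin n → ℝ) → ℝ := fun θ => sInf ((fun x => θ ⬝ᵥ x) '' X) with hS
  set F : (Fin n → ℝ) → ℝ := fun θ => (1 / (N : ℝ)) * ∑ i, |θ ⬝ᵥ xhat i / S θ - 1|
    with hF
  -- basic facts
  have hcont : ∀ θ : Fin n → ℝ, Continuous fun x : Fin n → ℝ => θ ⬝ᵥ x := by
    intro θ
    show Continuous fun x : Fin n → ℝ => ∑ j, θ j * x j
    exact continuous_finset_sum _ fun j _ => continuous_const.mul (continuous_apply j)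
  have hbdd : ∀ θ : Fin n → ℝ, BddBelow ((fun x => θ ⬝ᵥ x) '' X) :=
    fun θ => (hcpt.image (hcont θ)).bddBelow
  have himgne : ∀ θ : Fin n → ℝ, ((fun x => θ ⬝ᵥ x) '' X).Nonempty :=
    fun θ => hne.image _
  have hXle : ∀ (θ : Fin n → ℝ), ∀ x ∈ X, S θ ≤ θ ⬝ᵥ x :=
    fun θ x hx => csInf_le (hbdd θ) ⟨x, hx, rfl⟩
  -- boundedness consequence
  have hbd : ∀ u : Fin n → ℝ, 0 ≤ A.mulVec u → u = 0 := by
    intro u hu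
    by_contra hu0
    obtain ⟨x₀, hx₀⟩ := hne
    obtain ⟨R, hR⟩ := isBounded_iff_forall_norm_le.mp hcpt.isBounded
    obtain ⟨j, hj⟩ := Function.ne_iff.mp hu0
    have hj' : u j ≠ 0 := hj
    have hj0 : 0 < |u j| := abs_pos.mpr hj'
    have hR0 : 0 ≤ R := le_trans (norm_nonneg x₀) (hR x₀ hx₀)
    set t : ℝ := (R + |x₀ j| + 1) / |u j| with htdef
    have ht : 0 ≤ t := by positivity
    have hmem : x₀ + t • u ∈ X := by
      rw [hX]
      intro i
      have h1 : (A.mulVec (x₀ + t • u)) i = (A.mulVec x₀) i + t * (A.mulVec u) i := by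
        rw [Matrix.mulVec_add, Matrix.mulVec_smul]
        simp
      have hb0 : b i ≤ (A.mulVec x₀) i := by
        rw [hX] at hx₀; exact hx₀ i
      have h2 := mul_nonneg ht (hu i)
      show b i ≤ (A.mulVec (x₀ + t • u)) i
      rw [h1]
      linarith
    have hnorm := hR _ hmem
    have hcoord : |x₀ j + t * u j| ≤ ‖x₀ + t • u‖ := by
      have h := norm_le_pi_norm (x₀ + t • u) j
      simpa [Real.norm_eq_abs] using h
    have habs : t * |u j| ≤ |x₀ j + t * u j| + |x₀ j| := by
      calc t * |u j| = |t * u j| := by rw [abs_mul, abs_of_nonneg ht]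
        _ = |(x₀ j + t * u j) - x₀ j| := by ring_nf
        _ ≤ |x₀ j + t * u j| + |x₀ j| := abs_sub _ _
    have hteq : t * |u j| = R + |x₀ j| + 1 := by
      rw [htdef, div_mul_cancel₀ _ (ne_of_gt hj0)]
    linarith
  -- weak duality
  have hweak : ∀ (lam : Fin m → ℝ), 0 ≤ lam → ∀ x ∈ X,
      b ⬝ᵥ lam ≤ (Aᵀ.mulVec lam) ⬝ᵥ x := by
    intro lam hlam x hx
    have hx' : b ≤ A.mulVec x := by rw [hX] at hx; exact hx
    have h1 : b ⬝ᵥ lam ≤ (A.mulVec x) ⬝ᵥ lam := by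
      apply Finset.sum_le_sum
      intro i _
      exact mul_le_mul_of_nonneg_right (hx' i) (hlam i)
    have h2 : (Aᵀ.mulVec lam) ⬝ᵥ x = (A.mulVec x) ⬝ᵥ lam := by
      rw [Matrix.mulVec_transpose, ← Matrix.dotProduct_mulVec,
        dotProduct_comm]
    rw [h2]; exact h1
  -- the key construction: normalized dual pair for each θ ∈ Θ
  have hkey : ∀ θ ∈ Θ, ∃ θ' ∈ Θ, ∃ lam : Fin m → ℝ,
      0 ≤ lam ∧ Aᵀ.mulVec lam = θ' ∧ b ⬝ᵥ lam = 1 ∧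
      ∀ i, θ' ⬝ᵥ xhat i = θ ⬝ᵥ xhat i / S θ := by
    intro θ hθ
    have hs : 0 < S θ := hpos θ hθ
    have hlb : ∀ x, b ≤ A.mulVec x → S θ ≤ θ ⬝ᵥ x := by
      intro x hx'
      exact hXle θ x (by rw [hX]; exact hx')
    obtain ⟨lam0, hlam0, hAlam0, hblam0⟩ := lp_dual_exists A b θ (S θ) hlb hbd
    have hble : b ⬝ᵥ lam0 ≤ S θ := by
      apply le_csInf (himgne θ)
      rintro y ⟨x, hx, rfl⟩
      have := hweak lam0 hlam0 x hx
      rwa [hAlam0] at this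
    have hbeq : b ⬝ᵥ lam0 = S θ := le_antisymm hble hblam0
    refine ⟨(S θ)⁻¹ • θ, hscale θ hθ _ (inv_pos.mpr hs), (S θ)⁻¹ • lam0,
      fun i => mul_nonneg (inv_nonneg.mpr hs.le) (hlam0 i), ?_, ?_, ?_⟩
    · rw [Matrix.mulVec_smul, hAlam0]
    · rw [dotProduct_smul, smul_eq_mul, hbeq, inv_mul_cancel₀ (ne_of_gt hs)]
    · intro i
      rw [smul_dotProduct, smul_eq_mul, div_eq_inv_mul]
  -- RHS nonempty and bddbelow
  set RHS : Set ℝ := {v : ℝ | ∃ θ ∈ Θ, ∃ lam : Fin m → ℝ,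
      0 ≤ lam ∧ Aᵀ.mulVec lam = θ ∧ b ⬝ᵥ lam = 1 ∧
      v = (1 / (N : ℝ)) * ∑ i, |θ ⬝ᵥ xhat i - 1|} with hRHS
  have hRHSne : RHS.Nonempty := by
    obtain ⟨θ₀, hθ₀⟩ := hΘne
    obtain ⟨θ', hθ', lam, h1, h2, h3, _⟩ := hkey θ₀ hθ₀
    exact ⟨_, θ', hθ', lam, h1, h2, h3, rfl⟩
  have hRHSbdd : BddBelow RHS := by
    refine ⟨0, ?_⟩
    rintro v ⟨θ, hθ, lam, h1, h2, h3, rfl⟩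
    positivity
  have hLHSne : (F '' Θ).Nonempty := hΘne.image _
  have hLHSbdd : BddBelow (F '' Θ) := by
    refine ⟨0, ?_⟩
    rintro v ⟨θ, hθ, rfl⟩
    positivity
  refine le_antisymm ?_ ?_
  · -- sInf LHS ≤ sInf RHS
    apply le_csInf hRHSne
    rintro v ⟨θ, hθ, lam, hlam, hAlam, hblam, rfl⟩
    refine le_trans (csInf_le hLHSbdd ⟨θ, hθ, rfl⟩) ?_
    have h1le : 1 ≤ S θ := by
      apply le_csInf (himgne θ)
      rintro y ⟨x, hx, rfl⟩
      have := hweak lam hlam x hx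
      rw [hAlam, hblam] at this
      exact this
    rw [hF]
    apply mul_le_mul_of_nonneg_left _ (by positivity)
    apply Finset.sum_le_sum
    intro i _
    have ht : S θ ≤ θ ⬝ᵥ xhat i := hXle θ _ (hxhat i)
    have ht0 : 0 ≤ θ ⬝ᵥ xhat i := le_trans (by linarith) ht
    have hds : 1 ≤ θ ⬝ᵥ xhat i / S θ :=
      (le_div_iff₀ (by linarith)).mpr (by linarith)
    rw [abs_of_nonneg (by linarith), abs_of_nonneg (by linarith [ht, h1le])]
    have : θ ⬝ᵥ xhat i / S θ ≤ θ ⬝ᵥ xhat i := div_le_self ht0 h1le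
    linarith
  · -- sInf RHS ≤ sInf LHS
    apply le_csInf hLHSne
    rintro v ⟨θ, hθ, rfl⟩
    obtain ⟨θ', hθ', lam, h1, h2, h3, h4⟩ := hkey θ hθ
    have hsum : ∑ i, |θ ⬝ᵥ xhat i / S θ - 1| = ∑ i, |θ' ⬝ᵥ xhat i - 1| :=
      Finset.sum_congr rfl fun i _ => by rw [h4 i]
    have hFv : F θ = (1 / (N : ℝ)) * ∑ i, |θ' ⬝ᵥ xhat i - 1| := by
      simp only [hF]
      rw [hsum]
    rw [hFv]
    exact csInf_le hRHSbdd ⟨θ', hθ', lam, h1, h2, h3, rfl⟩
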